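/- If λ_min := min(y₁/x₁, (y₁-y₂)/(x₂-x₁), (1-y₂)/(1-x₂)) > 1, then the zipper map Z_p is β-hypersensitive with exponent β = 1 + log λ_min / log h_min ∈ (0,1) and constant C = h_min/2, where h_min = min(x₁, x₂-x₁, 1-x₂): that is, |Z_p(A)| ≥ (h_min/2)·|A|^β for every interval A ⊆ [0,1]. -/

import Mathlib

open Set MeasureTheory

/-- The zipper operator Φ_p acting on functions, defined piecewise. -/
noncomputable def zipperPhi (x₁ y₁ x₂ y₂ : ℝ) (f : ℝ → ℝ) : ℝ → ℝ := fun x =>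
  if x ≤ x₁ then y₁ * f (x / x₁)
  else if x ≤ x₂ then y₁ - (y₁ - y₂) * f ((x - x₁) / (x₂ - x₁))
  else y₂ + (1 - y₂) * f ((x - x₂) / (1 - x₂))

/-- Continuous maps f : [0,1] → [0,1] with f 0 = 0 and f 1 = 1. -/
def IsC00 (f : ℝ → ℝ) : Prop :=
  ContinuousOn f (Icc 0 1) ∧ MapsTo f (Icc 0 1) (Icc 0 1) ∧ f 0 = 0 ∧ f 1 = 1

set_option maxHeartbeats 4000000 in
/-- If λ_min > 1, the zipper map Z_p is β-hypersensitive with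
β = 1 + log λ_min / log h_min ∈ (0,1) and constant h_min/2. -/
theorem zipper_hypersensitive (x₁ y₁ x₂ y₂ : ℝ)
    (hx₁ : x₁ ∈ Ioo (0:ℝ) 1) (hy₁ : y₁ ∈ Ioo (0:ℝ) 1)
    (hx₂ : x₂ ∈ Ioo (0:ℝ) 1) (hy₂ : y₂ ∈ Ioo (0:ℝ) 1)
    (hx : x₁ < x₂) (hy : y₂ < y₁)
    (hlam : 1 < min (y₁ / x₁) (min ((y₁ - y₂) / (x₂ - x₁)) ((1 - y₂) / (1 - x₂))))
    (Z : ℝ → ℝ) (hZ : IsC00 Z) (hfix : EqOn (zipperPhi x₁ y₁ x₂ y₂ Z) Z (Icc 0 1)) :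
    (1 + Real.log (min (y₁ / x₁) (min ((y₁ - y₂) / (x₂ - x₁)) ((1 - y₂) / (1 - x₂)))) /
        Real.log (min x₁ (min (x₂ - x₁) (1 - x₂))) ∈ Ioo (0:ℝ) 1) ∧
    ∀ a b : ℝ, 0 ≤ a → a ≤ b → b ≤ 1 →
      min x₁ (min (x₂ - x₁) (1 - x₂)) / 2 *
        (b - a) ^ (1 + Real.log (min (y₁ / x₁) (min ((y₁ - y₂) / (x₂ - x₁)) ((1 - y₂) / (1 - x₂)))) /
          Real.log (min x₁ (min (x₂ - x₁) (1 - x₂)))) ≤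
      (volume (Z '' Icc a b)).toReal := by
  obtain ⟨hx10, hx11⟩ := hx₁
  obtain ⟨hy10, hy11⟩ := hy₁
  obtain ⟨hx20, hx21⟩ := hx₂
  obtain ⟨hy20, hy21⟩ := hy₂
  obtain ⟨hZc, hZm, hZ0, hZ1⟩ := hZ
  set lam := min (y₁ / x₁) (min ((y₁ - y₂) / (x₂ - x₁)) ((1 - y₂) / (1 - x₂))) with lam_def
  set hm := min x₁ (min (x₂ - x₁) (1 - x₂)) with hm_def
  set β := 1 + Real.log lam / Real.log hm with β_def
  set H := max x₁ (max (x₂ - x₁) (1 - x₂)) with H_def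
  have hd1 : 0 < x₂ - x₁ := by linarith
  have hd2 : 0 < 1 - x₂ := by linarith
  have hv1 : 0 < y₁ - y₂ := by linarith
  have hv2 : 0 < 1 - y₂ := by linarith
  have hmpos : 0 < hm := lt_min hx10 (lt_min hd1 hd2)
  have hm_le_x1 : hm ≤ x₁ := min_le_left _ _
  have hm_le_d1 : hm ≤ x₂ - x₁ := le_trans (min_le_right _ _) (min_le_left _ _)
  have hm_le_d2 : hm ≤ 1 - x₂ := le_trans (min_le_right _ _) (min_le_right _ _)
  have hmlt1 : hm < 1 := lt_of_le_of_lt hm_le_x1 hx11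
  have Hpos : 0 < H := lt_of_lt_of_le hx10 (le_max_left _ _)
  have Hlt1 : H < 1 := max_lt hx11 (max_lt (by linarith) (by linarith))
  have x1_le_H : x₁ ≤ H := le_max_left _ _
  have d1_le_H : x₂ - x₁ ≤ H := le_trans (le_max_left _ _) (le_max_right _ _)
  have d2_le_H : 1 - x₂ ≤ H := le_trans (le_max_right _ _) (le_max_right _ _)
  have lam1 : 1 < lam := hlam
  have lampos : 0 < lam := by linarith
  have lv0 : lam * x₁ ≤ y₁ := by
    have h := min_le_left (y₁ / x₁) (min ((y₁ - y₂) / (x₂ - x₁)) ((1 - y₂) / (1 - x₂)))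
    rw [← lam_def] at h
    exact (le_div_iff₀ hx10).mp h
  have lv1 : lam * (x₂ - x₁) ≤ y₁ - y₂ := by
    have h : lam ≤ (y₁ - y₂) / (x₂ - x₁) :=
      le_trans (min_le_right _ _) (min_le_left _ _)
    exact (le_div_iff₀ hd1).mp h
  have lv2 : lam * (1 - x₂) ≤ 1 - y₂ := by
    have h : lam ≤ (1 - y₂) / (1 - x₂) :=
      le_trans (min_le_right _ _) (min_le_right _ _)
    exact (le_div_iff₀ hd2).mp h
  have lamhm : lam * hm < 1 := by nlinarith
  have loghm : Real.log hm < 0 := Real.log_neg hmpos hmlt1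
  have loglam : 0 < Real.log lam := Real.log_pos lam1
  have βlt1 : β < 1 := by
    have h : Real.log lam / Real.log hm < 0 := div_neg_of_pos_of_neg loglam loghm
    rw [β_def]; linarith
  have βpos : 0 < β := by
    have hsum : Real.log lam + Real.log hm < 0 := by
      have h1 : Real.log (lam * hm) < 0 := Real.log_neg (by positivity) lamhm
      rwa [Real.log_mul lampos.ne' hmpos.ne'] at h1
    have h2 : (-1 : ℝ) < Real.log lam / Real.log hm := by
      rw [lt_div_iff_of_neg loghm]; linarith
    rw [β_def]; linarith
  have hlamhmpow : hm ^ (β - 1) = lam := by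
    rw [Real.rpow_def_of_pos hmpos]
    have h : Real.log hm * (β - 1) = Real.log lam := by
      have e : β - 1 = Real.log lam / Real.log hm := by rw [β_def]; ring
      rw [e, mul_comm, div_mul_cancel₀ _ loghm.ne]
    rw [h, Real.exp_log lampos]
  -- step lemma: core scaling inequality
  have step : ∀ xi vi ℓ : ℝ, hm ≤ xi → lam * xi ≤ vi → 0 ≤ ℓ →
      ℓ ^ β ≤ vi * (ℓ / xi) ^ β := by
    intro xi vi ℓ hxi hvi hℓ
    have hxip : 0 < xi := lt_of_lt_of_le hmpos hxi
    have hxipow : xi ^ β ≤ vi := by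
      have h1 : xi ^ (β - 1) ≤ lam := by
        rw [← hlamhmpow]
        have h2 : hm ^ (1 - β) ≤ xi ^ (1 - β) :=
          Real.rpow_le_rpow hmpos.le hxi (by linarith)
        have eneg : β - 1 = -(1 - β) := by ring
        rw [eneg, Real.rpow_neg hxip.le, Real.rpow_neg hmpos.le]
        exact inv_anti₀ (Real.rpow_pos_of_pos hmpos _) h2
      calc xi ^ β = xi ^ ((1:ℝ) + (β - 1)) := by norm_num
        _ = xi ^ (1:ℝ) * xi ^ (β - 1) := Real.rpow_add hxip 1 (β - 1)
        _ = xi * xi ^ (β - 1) := by rw [Real.rpow_one]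
        _ ≤ xi * lam := mul_le_mul_of_nonneg_left h1 hxip.le
        _ = lam * xi := mul_comm _ _
        _ ≤ vi := hvi
    rw [Real.div_rpow hℓ hxip.le]
    have hℓβ : 0 ≤ ℓ ^ β := Real.rpow_nonneg hℓ _
    have hxiβ : 0 < xi ^ β := Real.rpow_pos_of_pos hxip _
    rw [mul_div_assoc', le_div_iff₀ hxiβ]
    calc ℓ ^ β * xi ^ β = xi ^ β * ℓ ^ β := mul_comm _ _
      _ ≤ vi * ℓ ^ β := mul_le_mul_of_nonneg_right hxipow hℓβ
  -- affine self-similarity relations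
  have R0 : ∀ t, 0 ≤ t → t ≤ 1 → Z (x₁ * t) = y₁ * Z t := by
    intro t h0 h1
    have ha1 : x₁ * t ≤ x₁ := mul_le_of_le_one_right hx10.le h1
    have hmem : x₁ * t ∈ Icc (0:ℝ) 1 := ⟨by positivity, by linarith⟩
    have hfx := hfix hmem
    simp only [zipperPhi] at hfx
    rw [if_pos ha1] at hfx
    rw [← hfx]
    congr 2
    field_simp
  have Zx1 : Z x₁ = y₁ := by
    have h := R0 1 zero_le_one le_rfl
    rwa [mul_one, hZ1, mul_one] at h
  have R1 : ∀ t, 0 ≤ t → t ≤ 1 → Z (x₁ + (x₂ - x₁) * t) = y₁ - (y₁ - y₂) * Z t := by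
    intro t h0 h1
    rcases eq_or_lt_of_le h0 with h0' | hpos
    · rw [← h0', mul_zero, add_zero, hZ0, mul_zero, sub_zero, Zx1]
    · have ha0 : 0 < (x₂ - x₁) * t := mul_pos hd1 hpos
      have ha1 : (x₂ - x₁) * t ≤ x₂ - x₁ := mul_le_of_le_one_right hd1.le h1
      have hmem : x₁ + (x₂ - x₁) * t ∈ Icc (0:ℝ) 1 := ⟨by linarith, by linarith⟩
      have hfx := hfix hmem
      simp only [zipperPhi] at hfx
      rw [if_neg (not_le.mpr (by linarith)), if_pos (by linarith)] at hfx
      rw [← hfx]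
      congr 2
      congr 1; rw [add_sub_cancel_left, mul_div_cancel_left₀ _ hd1.ne']
  have Zx2 : Z x₂ = y₂ := by
    have h := R1 1 zero_le_one le_rfl
    rw [mul_one, hZ1, mul_one] at h
    have e : x₁ + (x₂ - x₁) = x₂ := by ring
    rw [e] at h
    rw [h]; ring
  have R2 : ∀ t, 0 ≤ t → t ≤ 1 → Z (x₂ + (1 - x₂) * t) = y₂ + (1 - y₂) * Z t := by
    intro t h0 h1
    rcases eq_or_lt_of_le h0 with h0' | hpos
    · rw [← h0', mul_zero, add_zero, hZ0, mul_zero, add_zero, Zx2]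
    · have ha0 : 0 < (1 - x₂) * t := mul_pos hd2 hpos
      have ha1 : (1 - x₂) * t ≤ 1 - x₂ := mul_le_of_le_one_right hd2.le h1
      have hmem : x₂ + (1 - x₂) * t ∈ Icc (0:ℝ) 1 := ⟨by linarith, by linarith⟩
      have hfx := hfix hmem
      simp only [zipperPhi] at hfx
      rw [if_neg (not_le.mpr (by linarith)), if_neg (not_le.mpr (by linarith))] at hfx
      rw [← hfx]
      congr 2
      congr 1; rw [add_sub_cancel_left, mul_div_cancel_left₀ _ hd2.ne']
  -- difference scaling
  have D0 : ∀ c d : ℝ, 0 ≤ c → c ≤ 1 → 0 ≤ d → d ≤ 1 →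
      |Z (x₁ * d) - Z (x₁ * c)| = y₁ * |Z d - Z c| := by
    intro c d hc0 hc1 hd0 hd1
    rw [R0 c hc0 hc1, R0 d hd0 hd1, ← mul_sub, abs_mul, abs_of_pos hy10]
  have D1 : ∀ c d : ℝ, 0 ≤ c → c ≤ 1 → 0 ≤ d → d ≤ 1 →
      |Z (x₁ + (x₂ - x₁) * d) - Z (x₁ + (x₂ - x₁) * c)| = (y₁ - y₂) * |Z d - Z c| := by
    intro c d hc0 hc1 hd0 hd1
    rw [R1 c hc0 hc1, R1 d hd0 hd1,
      show y₁ - (y₁ - y₂) * Z d - (y₁ - (y₁ - y₂) * Z c) = (y₁ - y₂) * (Z c - Z d) from by ring,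
      abs_mul, abs_of_pos hv1, abs_sub_comm]
  have D2 : ∀ c d : ℝ, 0 ≤ c → c ≤ 1 → 0 ≤ d → d ≤ 1 →
      |Z (x₂ + (1 - x₂) * d) - Z (x₂ + (1 - x₂) * c)| = (1 - y₂) * |Z d - Z c| := by
    intro c d hc0 hc1 hd0 hd1
    rw [R2 c hc0 hc1, R2 d hd0 hd1,
      show y₂ + (1 - y₂) * Z d - (y₂ + (1 - y₂) * Z c) = (1 - y₂) * (Z d - Z c) from by ring,
      abs_mul, abs_of_pos hv2]
  -- helper inequalities
  have half : ∀ ℓ u : ℝ, 0 ≤ ℓ → ℓ ≤ 2 * u → hm / 2 * ℓ ^ β ≤ hm * u ^ β := by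
    intro ℓ u h0 h2
    have hu : 0 ≤ u := by linarith
    have h1 : ℓ ^ β ≤ (2 * u) ^ β := Real.rpow_le_rpow h0 h2 βpos.le
    have h3 : (2 * u) ^ β = 2 ^ β * u ^ β := Real.mul_rpow (by norm_num) hu
    have h4 : (2:ℝ) ^ β ≤ 2 := by
      calc (2:ℝ) ^ β ≤ (2:ℝ) ^ (1:ℝ) :=
            Real.rpow_le_rpow_of_exponent_le one_le_two βlt1.le
        _ = 2 := Real.rpow_one 2
    have h5 : 0 ≤ u ^ β := Real.rpow_nonneg hu β
    calc hm / 2 * ℓ ^ β ≤ hm / 2 * (2 ^ β * u ^ β) :=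
          mul_le_mul_of_nonneg_left (h1.trans_eq h3) (by positivity)
      _ ≤ hm / 2 * (2 * u ^ β) :=
          mul_le_mul_of_nonneg_left (mul_le_mul_of_nonneg_right h4 h5) (by positivity)
      _ = hm * u ^ β := by ring
  have direct : ∀ ℓ xi vi : ℝ, 0 ≤ ℓ → ℓ ≤ 1 → hm ≤ xi → lam * xi ≤ vi →
      hm * ℓ ^ β ≤ vi := by
    intro ℓ xi vi h0 h1 hxi hvi
    have h2 : ℓ ^ β ≤ 1 := Real.rpow_le_one h0 h1 βpos.le
    have h3 : 0 ≤ ℓ ^ β := Real.rpow_nonneg h0 β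
    calc hm * ℓ ^ β ≤ hm * 1 := mul_le_mul_of_nonneg_left h2 hmpos.le
      _ = hm := mul_one hm
      _ ≤ lam * hm := le_mul_of_one_le_left hmpos.le lam1.le
      _ ≤ lam * xi := mul_le_mul_of_nonneg_left hxi lampos.le
      _ ≤ vi := hvi
  have epow : ∀ ε : ℝ, 0 < ε → ∃ n : ℕ, H ^ n ≤ ε := by
    intro ε hε
    obtain ⟨n, hn⟩ := exists_pow_lt_of_lt_one hε Hlt1
    exact ⟨n, hn.le⟩
  -- left-anchored intervals
  have TL : ∀ n : ℕ, ∀ b : ℝ, 0 < b → b ≤ 1 → H ^ n ≤ b →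
      ∃ c d, 0 ≤ c ∧ c ≤ b ∧ 0 ≤ d ∧ d ≤ b ∧ hm * b ^ β ≤ |Z d - Z c| := by
    intro n
    induction n with
    | zero =>
      intro b hb0 hb1 hH
      rw [pow_zero] at hH
      refine ⟨0, 1, le_rfl, by linarith, zero_le_one, by linarith, ?_⟩
      rw [hZ1, hZ0, sub_zero, abs_one]
      have h2 : b ^ β ≤ 1 := Real.rpow_le_one hb0.le hb1 βpos.le
      calc hm * b ^ β ≤ hm * 1 := mul_le_mul_of_nonneg_left h2 hmpos.le
        _ ≤ 1 := by linarith
    | succ n IH =>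
      intro b hb0 hb1 hH
      by_cases hbx : x₁ ≤ b
      · refine ⟨0, x₁, le_rfl, by linarith, hx10.le, hbx, ?_⟩
        rw [Zx1, hZ0, sub_zero, abs_of_pos hy10]
        exact direct b x₁ y₁ hb0.le hb1 hm_le_x1 lv0
      · push_neg at hbx
        have hb'0 : 0 < b / x₁ := by positivity
        have hb'1 : b / x₁ ≤ 1 := by rw [div_le_one hx10]; exact hbx.le
        have hH' : H ^ n ≤ b / x₁ := by
          rw [le_div_iff₀ hx10]
          calc H ^ n * x₁ ≤ H ^ n * H :=
                mul_le_mul_of_nonneg_left x1_le_H (pow_nonneg Hpos.le n)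
            _ = H ^ (n + 1) := (pow_succ H n).symm
            _ ≤ b := hH
        obtain ⟨c', d', h1, h2, h3, h4, h5⟩ := IH (b / x₁) hb'0 hb'1 hH'
        have hc1 : c' ≤ 1 := h2.trans hb'1
        have hd1 : d' ≤ 1 := h4.trans hb'1
        refine ⟨x₁ * c', x₁ * d', by positivity, ?_, by positivity, ?_, ?_⟩
        · calc x₁ * c' ≤ x₁ * (b / x₁) := mul_le_mul_of_nonneg_left h2 hx10.le
            _ = b := by field_simp
        · calc x₁ * d' ≤ x₁ * (b / x₁) := mul_le_mul_of_nonneg_left h4 hx10.le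
            _ = b := by field_simp
        · rw [D0 c' d' h1 hc1 h3 hd1]
          calc hm * b ^ β ≤ hm * (y₁ * (b / x₁) ^ β) :=
                mul_le_mul_of_nonneg_left (step x₁ y₁ b hm_le_x1 lv0 hb0.le) hmpos.le
            _ = y₁ * (hm * (b / x₁) ^ β) := by ring
            _ ≤ y₁ * |Z d' - Z c'| := mul_le_mul_of_nonneg_left h5 hy10.le
  -- right-anchored intervals
  have TR : ∀ n : ℕ, ∀ a : ℝ, 0 ≤ a → H ^ n ≤ 1 - a →
      ∃ c d, a ≤ c ∧ c ≤ 1 ∧ a ≤ d ∧ d ≤ 1 ∧ hm * (1 - a) ^ β ≤ |Z d - Z c| := by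
    intro n
    induction n with
    | zero =>
      intro a ha0 hH
      rw [pow_zero] at hH
      refine ⟨0, 1, by linarith, zero_le_one, by linarith, le_rfl, ?_⟩
      rw [hZ1, hZ0, sub_zero, abs_one]
      have h2 : (1 - a) ^ β ≤ 1 := Real.rpow_le_one (by linarith) (by linarith) βpos.le
      calc hm * (1 - a) ^ β ≤ hm * 1 := mul_le_mul_of_nonneg_left h2 hmpos.le
        _ ≤ 1 := by linarith
    | succ n IH =>
      intro a ha0 hH
      have ha1 : a < 1 := by
        have := pow_pos Hpos (n + 1); linarith
      by_cases hax : a ≤ x₂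
      · refine ⟨x₂, 1, hax, hx21.le, by linarith, le_rfl, ?_⟩
        rw [hZ1, Zx2, abs_of_pos hv2]
        exact direct (1 - a) (1 - x₂) (1 - y₂) (by linarith) (by linarith) hm_le_d2 lv2
      · push_neg at hax
        set a' := (a - x₂) / (1 - x₂) with a'_def
        have ha'0 : 0 ≤ a' := div_nonneg (by linarith) hd2.le
        have e : 1 - a' = (1 - a) / (1 - x₂) := by
          rw [a'_def]; field_simp; ring
        have hH' : H ^ n ≤ 1 - a' := by
          rw [e, le_div_iff₀ hd2]
          calc H ^ n * (1 - x₂) ≤ H ^ n * H :=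
                mul_le_mul_of_nonneg_left d2_le_H (pow_nonneg Hpos.le n)
            _ = H ^ (n + 1) := (pow_succ H n).symm
            _ ≤ 1 - a := hH
        obtain ⟨c', d', h1, h2, h3, h4, h5⟩ := IH a' ha'0 hH'
        have hc0 : 0 ≤ c' := le_trans ha'0 h1
        have hd0 : 0 ≤ d' := le_trans ha'0 h3
        rw [e] at h5
        have ea : (1 - x₂) * a' = a - x₂ := by
          rw [a'_def]; field_simp
        refine ⟨x₂ + (1 - x₂) * c', x₂ + (1 - x₂) * d', ?_, ?_, ?_, ?_, ?_⟩
        · have h := mul_le_mul_of_nonneg_left h1 hd2.le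
          linarith
        · have h := mul_le_mul_of_nonneg_left h2 hd2.le
          rw [mul_one] at h; linarith
        · have h := mul_le_mul_of_nonneg_left h3 hd2.le
          linarith
        · have h := mul_le_mul_of_nonneg_left h4 hd2.le
          rw [mul_one] at h; linarith
        · rw [D2 c' d' hc0 h2 hd0 h4]
          calc hm * (1 - a) ^ β ≤ hm * ((1 - y₂) * ((1 - a) / (1 - x₂)) ^ β) :=
                mul_le_mul_of_nonneg_left
                  (step (1 - x₂) (1 - y₂) (1 - a) hm_le_d2 lv2 (by linarith)) hmpos.le
            _ = (1 - y₂) * (hm * ((1 - a) / (1 - x₂)) ^ β) := by ring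
            _ ≤ (1 - y₂) * |Z d' - Z c'| := mul_le_mul_of_nonneg_left h5 hv2.le
  have KEY : ∀ n : ℕ, ∀ a b : ℝ, 0 ≤ a → b ≤ 1 → H ^ n ≤ b - a →
      ∃ c d, a ≤ c ∧ c ≤ b ∧ a ≤ d ∧ d ≤ b ∧ hm / 2 * (b - a) ^ β ≤ |Z d - Z c| := by
    intro n
    induction n with
    | zero =>
      intro a b ha hb hH
      rw [pow_zero] at hH
      refine ⟨0, 1, by linarith, by linarith, by linarith, by linarith, ?_⟩
      rw [hZ1, hZ0, sub_zero, abs_one]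
      have h2 : (b - a) ^ β ≤ 1 := Real.rpow_le_one (by linarith) (by linarith) βpos.le
      calc hm / 2 * (b - a) ^ β ≤ hm / 2 * 1 := mul_le_mul_of_nonneg_left h2 (by positivity)
        _ ≤ 1 := by linarith
    | succ n IH =>
      intro a b ha hb hH
      have hℓ : 0 < b - a := lt_of_lt_of_le (pow_pos Hpos _) hH
      by_cases hbx1 : b ≤ x₁
      · -- contained in I₀
        have hsub : H ^ n ≤ b / x₁ - a / x₁ := by
          rw [div_sub_div_same, le_div_iff₀ hx10]
          calc H ^ n * x₁ ≤ H ^ n * H :=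
                mul_le_mul_of_nonneg_left x1_le_H (pow_nonneg Hpos.le n)
            _ = H ^ (n + 1) := (pow_succ H n).symm
            _ ≤ b - a := hH
        have hb'1 : b / x₁ ≤ 1 := by rw [div_le_one hx10]; linarith
        obtain ⟨c', d', h1, h2, h3, h4, h5⟩ :=
          IH (a / x₁) (b / x₁) (div_nonneg ha hx10.le) hb'1 hsub
        have hc0 : 0 ≤ c' := le_trans (div_nonneg ha hx10.le) h1
        have hd0 : 0 ≤ d' := le_trans (div_nonneg ha hx10.le) h3
        have hc1 : c' ≤ 1 := h2.trans hb'1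
        have hd1 : d' ≤ 1 := h4.trans hb'1
        refine ⟨x₁ * c', x₁ * d', ?_, ?_, ?_, ?_, ?_⟩
        · have := (div_le_iff₀ hx10).mp h1; linarith
        · have := (le_div_iff₀ hx10).mp h2; linarith
        · have := (div_le_iff₀ hx10).mp h3; linarith
        · have := (le_div_iff₀ hx10).mp h4; linarith
        · rw [D0 c' d' hc0 hc1 hd0 hd1]
          calc hm / 2 * (b - a) ^ β ≤ hm / 2 * (y₁ * ((b - a) / x₁) ^ β) :=
                mul_le_mul_of_nonneg_left (step x₁ y₁ (b - a) hm_le_x1 lv0 hℓ.le)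
                  (by positivity)
            _ = y₁ * (hm / 2 * ((b - a) / x₁) ^ β) := by ring
            _ = y₁ * (hm / 2 * (b / x₁ - a / x₁) ^ β) := by rw [← div_sub_div_same]
            _ ≤ y₁ * |Z d' - Z c'| := mul_le_mul_of_nonneg_left h5 hy10.le
      · push_neg at hbx1
        by_cases hax1 : a < x₁
        · -- straddles x₁
          by_cases hhalf : b - a ≤ 2 * (x₁ - a)
          · -- left part [a, x₁] big, right-anchored in I₀
            have h1a : 0 < x₁ - a := by linarith
            have e : 1 - a / x₁ = (x₁ - a) / x₁ := by field_simp
            obtain ⟨m, hmH⟩ := epow ((x₁ - a) / x₁) (by positivity)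
            have hmH' : H ^ m ≤ 1 - a / x₁ := by rw [e]; exact hmH
            obtain ⟨c', d', h1, h2, h3, h4, h5⟩ :=
              TR m (a / x₁) (div_nonneg ha hx10.le) hmH'
            rw [e] at h5
            have hc0 : 0 ≤ c' := le_trans (div_nonneg ha hx10.le) h1
            have hd0 : 0 ≤ d' := le_trans (div_nonneg ha hx10.le) h3
            refine ⟨x₁ * c', x₁ * d', ?_, ?_, ?_, ?_, ?_⟩
            · have := (div_le_iff₀ hx10).mp h1; linarith
            · have := mul_le_mul_of_nonneg_left h2 hx10.le
              rw [mul_one] at this; linarith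
            · have := (div_le_iff₀ hx10).mp h3; linarith
            · have := mul_le_mul_of_nonneg_left h4 hx10.le
              rw [mul_one] at this; linarith
            · rw [D0 c' d' hc0 h2 hd0 h4]
              calc hm / 2 * (b - a) ^ β ≤ hm * (x₁ - a) ^ β :=
                    half (b - a) (x₁ - a) hℓ.le hhalf
                _ ≤ hm * (y₁ * ((x₁ - a) / x₁) ^ β) :=
                    mul_le_mul_of_nonneg_left
                      (step x₁ y₁ (x₁ - a) hm_le_x1 lv0 h1a.le) hmpos.le
                _ = y₁ * (hm * ((x₁ - a) / x₁) ^ β) := by ring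
                _ ≤ y₁ * |Z d' - Z c'| := mul_le_mul_of_nonneg_left h5 hy10.le
          · push_neg at hhalf
            by_cases hbx2 : b ≤ x₂
            · -- right part [x₁, b] big, left-anchored in I₁
              have h1b : 0 < b - x₁ := by linarith
              have hb''0 : 0 < (b - x₁) / (x₂ - x₁) := by positivity
              have hb''1 : (b - x₁) / (x₂ - x₁) ≤ 1 := by
                rw [div_le_one hd1]; linarith
              obtain ⟨m, hmH⟩ := epow ((b - x₁) / (x₂ - x₁)) hb''0
              obtain ⟨c', d', h1, h2, h3, h4, h5⟩ :=
                TL m ((b - x₁) / (x₂ - x₁)) hb''0 hb''1 hmH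
              have hc1 : c' ≤ 1 := h2.trans hb''1
              have hd1'' : d' ≤ 1 := h4.trans hb''1
              refine ⟨x₁ + (x₂ - x₁) * c', x₁ + (x₂ - x₁) * d', ?_, ?_, ?_, ?_, ?_⟩
              · have := mul_nonneg hd1.le h1; linarith
              · have := (le_div_iff₀ hd1).mp h2; linarith
              · have := mul_nonneg hd1.le h3; linarith
              · have := (le_div_iff₀ hd1).mp h4; linarith
              · rw [D1 c' d' h1 hc1 h3 hd1'']
                calc hm / 2 * (b - a) ^ β ≤ hm * (b - x₁) ^ β :=
                      half (b - a) (b - x₁) hℓ.le (by linarith)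
                  _ ≤ hm * ((y₁ - y₂) * ((b - x₁) / (x₂ - x₁)) ^ β) :=
                      mul_le_mul_of_nonneg_left
                        (step (x₂ - x₁) (y₁ - y₂) (b - x₁) hm_le_d1 lv1 h1b.le) hmpos.le
                  _ = (y₁ - y₂) * (hm * ((b - x₁) / (x₂ - x₁)) ^ β) := by ring
                  _ ≤ (y₁ - y₂) * |Z d' - Z c'| := mul_le_mul_of_nonneg_left h5 hv1.le
            · -- contains the whole middle cell [x₁, x₂]
              push_neg at hbx2
              refine ⟨x₁, x₂, hax1.le, by linarith, by linarith, hbx2.le, ?_⟩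
              rw [Zx1, Zx2, show y₂ - y₁ = -(y₁ - y₂) from by ring, abs_neg,
                abs_of_pos hv1]
              have h0 : 0 ≤ (b - a) ^ β := Real.rpow_nonneg hℓ.le β
              calc hm / 2 * (b - a) ^ β ≤ hm * (b - a) ^ β :=
                    mul_le_mul_of_nonneg_right (by linarith) h0
                _ ≤ y₁ - y₂ := direct (b - a) (x₂ - x₁) (y₁ - y₂) hℓ.le
                    (by linarith) hm_le_d1 lv1
        · push_neg at hax1
          by_cases hbx2 : b ≤ x₂
          · -- contained in I₁
            have hsub : H ^ n ≤ (b - x₁) / (x₂ - x₁) - (a - x₁) / (x₂ - x₁) := by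
              rw [div_sub_div_same]
              have e : b - x₁ - (a - x₁) = b - a := by ring
              rw [e, le_div_iff₀ hd1]
              calc H ^ n * (x₂ - x₁) ≤ H ^ n * H :=
                    mul_le_mul_of_nonneg_left d1_le_H (pow_nonneg Hpos.le n)
                _ = H ^ (n + 1) := (pow_succ H n).symm
                _ ≤ b - a := hH
            have hb'1 : (b - x₁) / (x₂ - x₁) ≤ 1 := by
              rw [div_le_one hd1]; linarith
            obtain ⟨c', d', h1, h2, h3, h4, h5⟩ :=
              IH ((a - x₁) / (x₂ - x₁)) ((b - x₁) / (x₂ - x₁))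
                (div_nonneg (by linarith) hd1.le) hb'1 hsub
            have ha'0 : 0 ≤ (a - x₁) / (x₂ - x₁) := div_nonneg (by linarith) hd1.le
            have hc0 : 0 ≤ c' := le_trans ha'0 h1
            have hd0 : 0 ≤ d' := le_trans ha'0 h3
            have hc1 : c' ≤ 1 := h2.trans hb'1
            have hd1' : d' ≤ 1 := h4.trans hb'1
            refine ⟨x₁ + (x₂ - x₁) * c', x₁ + (x₂ - x₁) * d', ?_, ?_, ?_, ?_, ?_⟩
            · have := (div_le_iff₀ hd1).mp h1; linarith
            · have := (le_div_iff₀ hd1).mp h2; linarith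
            · have := (div_le_iff₀ hd1).mp h3; linarith
            · have := (le_div_iff₀ hd1).mp h4; linarith
            · rw [D1 c' d' hc0 hc1 hd0 hd1']
              have e2 : (b - a) / (x₂ - x₁)
                  = (b - x₁) / (x₂ - x₁) - (a - x₁) / (x₂ - x₁) := by
                rw [div_sub_div_same]; congr 1; ring
              calc hm / 2 * (b - a) ^ β
                  ≤ hm / 2 * ((y₁ - y₂) * ((b - a) / (x₂ - x₁)) ^ β) :=
                    mul_le_mul_of_nonneg_left
                      (step (x₂ - x₁) (y₁ - y₂) (b - a) hm_le_d1 lv1 hℓ.le)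
                      (by positivity)
                _ = (y₁ - y₂) * (hm / 2 * ((b - a) / (x₂ - x₁)) ^ β) := by ring
                _ = (y₁ - y₂) * (hm / 2 *
                      ((b - x₁) / (x₂ - x₁) - (a - x₁) / (x₂ - x₁)) ^ β) := by rw [e2]
                _ ≤ (y₁ - y₂) * |Z d' - Z c'| := mul_le_mul_of_nonneg_left h5 hv1.le
          · push_neg at hbx2
            by_cases hax2 : a < x₂
            · -- straddles x₂ (with x₁ ≤ a)
              by_cases hhalf : b - a ≤ 2 * (x₂ - a)
              · -- left part [a, x₂] big, right-anchored in I₁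
                have h1a : 0 < x₂ - a := by linarith
                have e : 1 - (a - x₁) / (x₂ - x₁) = (x₂ - a) / (x₂ - x₁) := by
                  field_simp; ring
                obtain ⟨m, hmH⟩ := epow ((x₂ - a) / (x₂ - x₁)) (by positivity)
                have hmH' : H ^ m ≤ 1 - (a - x₁) / (x₂ - x₁) := by rw [e]; exact hmH
                obtain ⟨c', d', h1, h2, h3, h4, h5⟩ :=
                  TR m ((a - x₁) / (x₂ - x₁)) (div_nonneg (by linarith) hd1.le) hmH'
                rw [e] at h5
                have ha'0 : 0 ≤ (a - x₁) / (x₂ - x₁) := div_nonneg (by linarith) hd1.le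
                have hc0 : 0 ≤ c' := le_trans ha'0 h1
                have hd0 : 0 ≤ d' := le_trans ha'0 h3
                refine ⟨x₁ + (x₂ - x₁) * c', x₁ + (x₂ - x₁) * d', ?_, ?_, ?_, ?_, ?_⟩
                · have := (div_le_iff₀ hd1).mp h1; linarith
                · have := mul_le_mul_of_nonneg_left h2 hd1.le
                  rw [mul_one] at this; linarith
                · have := (div_le_iff₀ hd1).mp h3; linarith
                · have := mul_le_mul_of_nonneg_left h4 hd1.le
                  rw [mul_one] at this; linarith
                · rw [D1 c' d' hc0 h2 hd0 h4]
                  calc hm / 2 * (b - a) ^ β ≤ hm * (x₂ - a) ^ β :=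
                        half (b - a) (x₂ - a) hℓ.le hhalf
                    _ ≤ hm * ((y₁ - y₂) * ((x₂ - a) / (x₂ - x₁)) ^ β) :=
                        mul_le_mul_of_nonneg_left
                          (step (x₂ - x₁) (y₁ - y₂) (x₂ - a) hm_le_d1 lv1 h1a.le)
                          hmpos.le
                    _ = (y₁ - y₂) * (hm * ((x₂ - a) / (x₂ - x₁)) ^ β) := by ring
                    _ ≤ (y₁ - y₂) * |Z d' - Z c'| :=
                        mul_le_mul_of_nonneg_left h5 hv1.le
              · -- right part [x₂, b] big, left-anchored in I₂
                push_neg at hhalf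
                have h1b : 0 < b - x₂ := by linarith
                have hb''0 : 0 < (b - x₂) / (1 - x₂) := by positivity
                have hb''1 : (b - x₂) / (1 - x₂) ≤ 1 := by
                  rw [div_le_one hd2]; linarith
                obtain ⟨m, hmH⟩ := epow ((b - x₂) / (1 - x₂)) hb''0
                obtain ⟨c', d', h1, h2, h3, h4, h5⟩ :=
                  TL m ((b - x₂) / (1 - x₂)) hb''0 hb''1 hmH
                have hc1 : c' ≤ 1 := h2.trans hb''1
                have hd1' : d' ≤ 1 := h4.trans hb''1
                refine ⟨x₂ + (1 - x₂) * c', x₂ + (1 - x₂) * d', ?_, ?_, ?_, ?_, ?_⟩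
                · have := mul_nonneg hd2.le h1; linarith
                · have := (le_div_iff₀ hd2).mp h2; linarith
                · have := mul_nonneg hd2.le h3; linarith
                · have := (le_div_iff₀ hd2).mp h4; linarith
                · rw [D2 c' d' h1 hc1 h3 hd1']
                  calc hm / 2 * (b - a) ^ β ≤ hm * (b - x₂) ^ β :=
                        half (b - a) (b - x₂) hℓ.le (by linarith)
                    _ ≤ hm * ((1 - y₂) * ((b - x₂) / (1 - x₂)) ^ β) :=
                        mul_le_mul_of_nonneg_left
                          (step (1 - x₂) (1 - y₂) (b - x₂) hm_le_d2 lv2 h1b.le)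
                          hmpos.le
                    _ = (1 - y₂) * (hm * ((b - x₂) / (1 - x₂)) ^ β) := by ring
                    _ ≤ (1 - y₂) * |Z d' - Z c'| :=
                        mul_le_mul_of_nonneg_left h5 hv2.le
            · -- contained in I₂
              push_neg at hax2
              have hsub : H ^ n ≤ (b - x₂) / (1 - x₂) - (a - x₂) / (1 - x₂) := by
                rw [div_sub_div_same]
                have e : b - x₂ - (a - x₂) = b - a := by ring
                rw [e, le_div_iff₀ hd2]
                calc H ^ n * (1 - x₂) ≤ H ^ n * H :=
                      mul_le_mul_of_nonneg_left d2_le_H (pow_nonneg Hpos.le n)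
                  _ = H ^ (n + 1) := (pow_succ H n).symm
                  _ ≤ b - a := hH
              have hb'1 : (b - x₂) / (1 - x₂) ≤ 1 := by
                rw [div_le_one hd2]; linarith
              obtain ⟨c', d', h1, h2, h3, h4, h5⟩ :=
                IH ((a - x₂) / (1 - x₂)) ((b - x₂) / (1 - x₂))
                  (div_nonneg (by linarith) hd2.le) hb'1 hsub
              have ha'0 : 0 ≤ (a - x₂) / (1 - x₂) := div_nonneg (by linarith) hd2.le
              have hc0 : 0 ≤ c' := le_trans ha'0 h1
              have hd0 : 0 ≤ d' := le_trans ha'0 h3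
              have hc1 : c' ≤ 1 := h2.trans hb'1
              have hd1' : d' ≤ 1 := h4.trans hb'1
              refine ⟨x₂ + (1 - x₂) * c', x₂ + (1 - x₂) * d', ?_, ?_, ?_, ?_, ?_⟩
              · have := (div_le_iff₀ hd2).mp h1; linarith
              · have := (le_div_iff₀ hd2).mp h2; linarith
              · have := (div_le_iff₀ hd2).mp h3; linarith
              · have := (le_div_iff₀ hd2).mp h4; linarith
              · rw [D2 c' d' hc0 hc1 hd0 hd1']
                have e2 : (b - a) / (1 - x₂)
                    = (b - x₂) / (1 - x₂) - (a - x₂) / (1 - x₂) := by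
                  rw [div_sub_div_same]; congr 1; ring
                calc hm / 2 * (b - a) ^ β
                    ≤ hm / 2 * ((1 - y₂) * ((b - a) / (1 - x₂)) ^ β) :=
                      mul_le_mul_of_nonneg_left
                        (step (1 - x₂) (1 - y₂) (b - a) hm_le_d2 lv2 hℓ.le)
                        (by positivity)
                  _ = (1 - y₂) * (hm / 2 * ((b - a) / (1 - x₂)) ^ β) := by ring
                  _ = (1 - y₂) * (hm / 2 *
                        ((b - x₂) / (1 - x₂) - (a - x₂) / (1 - x₂)) ^ β) := by rw [e2]
                  _ ≤ (1 - y₂) * |Z d' - Z c'| := mul_le_mul_of_nonneg_left h5 hv2.le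
  constructor
  · exact ⟨βpos, βlt1⟩
  · intro a b ha hab hb
    rcases eq_or_lt_of_le hab with h' | hlt
    · rw [← h', sub_self, Real.zero_rpow βpos.ne', mul_zero]
      exact ENNReal.toReal_nonneg
    · obtain ⟨n, hn⟩ := epow (b - a) (by linarith)
      obtain ⟨c, d, h1, h2, h3, h4, h5⟩ := KEY n a b ha hb hn
      have hsub : Icc a b ⊆ Icc (0:ℝ) 1 := Icc_subset_Icc ha hb
      have hcd : uIcc c d ⊆ Icc a b := uIcc_subset_Icc ⟨h1, h2⟩ ⟨h3, h4⟩
      have hcont : ContinuousOn Z (uIcc c d) := hZc.mono (hcd.trans hsub)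
      have himg : uIcc (Z c) (Z d) ⊆ Z '' Icc a b :=
        (intermediate_value_uIcc hcont).trans (image_mono (f := Z) hcd)
      have hfin : volume (Z '' Icc a b) ≠ ⊤ := by
        have hss : Z '' Icc a b ⊆ Icc (0:ℝ) 1 := (hZm.mono_left hsub).image_subset
        refine ne_top_of_le_ne_top ?_ (measure_mono hss)
        simp [Real.volume_Icc]
      have hvol : ENNReal.ofReal |Z d - Z c| ≤ volume (Z '' Icc a b) := by
        have : volume (uIcc (Z c) (Z d)) = ENNReal.ofReal |Z d - Z c| := by
          rcases le_total (Z c) (Z d) with hle | hle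
          · rw [uIcc_of_le hle, Real.volume_Icc, abs_of_nonneg (by linarith)]
          · rw [uIcc_of_ge hle, Real.volume_Icc, abs_of_nonpos (by linarith),
              neg_sub]
        rw [← this]
        exact measure_mono himg
      calc hm / 2 * (b - a) ^ β ≤ |Z d - Z c| := h5
        _ = (ENNReal.ofReal |Z d - Z c|).toReal :=
            (ENNReal.toReal_ofReal (abs_nonneg _)).symm
        _ ≤ (volume (Z '' Icc a b)).toReal := ENNReal.toReal_mono hfin hvol
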